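/- A real normed linear space X is an inner product space if and only if for all nonzero x, y ∈ X, ‖x/‖x‖ − y/‖y‖‖ ≤ ‖x/‖y‖ − y/‖x‖‖. -/

import Mathlib

open MeasureTheory

namespace Stmt13Aux
noncomputable section
variable {X : Type*} [NormedAddCommGroup X] [NormedSpace ℝ X]

def Hyp (X : Type*) [NormedAddCommGroup X] [NormedSpace ℝ X] : Prop :=
  ∀ x y : X, x ≠ 0 → y ≠ 0 →
      ‖(1 / ‖x‖) • x - (1 / ‖y‖) • y‖ ≤ ‖(1 / ‖y‖) • x - (1 / ‖x‖) • y‖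

/-- Lorch-type inequality derived from the angular-distance hypothesis. -/
lemma lorch' (h : Hyp X)
    (u v : X) (hu : ‖u‖ = 1) (hv : ‖v‖ = 1)
    {a b : ℝ} (ha : 0 < a) (hb : 0 < b) :
    a * b * ‖u + v‖ ^ 2 ≤ ‖a • u + b • v‖ ^ 2 := by
  set s := Real.sqrt a with hs
  set t := Real.sqrt b with ht
  have hs0 : 0 < s := Real.sqrt_pos.2 ha
  have ht0 : 0 < t := Real.sqrt_pos.2 hb
  have hs2 : s * s = a := Real.mul_self_sqrt ha.le
  have ht2 : t * t = b := Real.mul_self_sqrt hb.le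
  have hu0 : u ≠ 0 := fun h0 => by simp [h0] at hu
  have hv0 : v ≠ 0 := fun h0 => by simp [h0] at hv
  have hx : (s • u) ≠ 0 := smul_ne_zero hs0.ne' hu0
  have hy : (-(t • v)) ≠ 0 := neg_ne_zero.2 (smul_ne_zero ht0.ne' hv0)
  have hnx : ‖s • u‖ = s := by rw [norm_smul, hu, Real.norm_eq_abs, abs_of_pos hs0, mul_one]
  have hny : ‖-(t • v)‖ = t := by
    rw [norm_neg, norm_smul, hv, Real.norm_eq_abs, abs_of_pos ht0, mul_one]
  have H := h (s • u) (-(t • v)) hx hy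
  rw [hnx, hny] at H
  have e1 : (1 / s) • (s • u) - (1 / t) • (-(t • v)) = u + v := by
    rw [smul_smul, smul_neg, smul_smul]
    field_simp
    simp
  have e2 : (1 / t) • (s • u) - (1 / s) • (-(t • v)) = (s/t) • u + (t/s) • v := by
    rw [smul_smul, smul_neg, smul_smul, sub_neg_eq_add]
    congr 1 <;> congr 1 <;> field_simp
  rw [e1, e2] at H
  -- multiply by s*t
  have key : s * t * ‖u + v‖ ≤ ‖a • u + b • v‖ := by
    have h2 : s * t * ‖(s/t) • u + (t/s) • v‖ = ‖a • u + b • v‖ := by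
      rw [show s*t*‖(s/t) • u + (t/s) • v‖ = ‖(s*t) • ((s/t) • u + (t/s) • v)‖ by
        rw [norm_smul, Real.norm_eq_abs, abs_of_pos (mul_pos hs0 ht0)]]
      congr 1
      rw [smul_add, smul_smul, smul_smul, ← hs2, ← ht2]
      congr 2 <;> field_simp <;> ring
    calc s * t * ‖u + v‖ ≤ s * t * ‖(s/t) • u + (t/s) • v‖ := by
          exact mul_le_mul_of_nonneg_left H (mul_pos hs0 ht0).le
      _ = ‖a • u + b • v‖ := h2
  have h0 : 0 ≤ s * t * ‖u + v‖ := by positivity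
  calc a * b * ‖u + v‖ ^ 2 = (s * t * ‖u + v‖)^2 := by rw [← hs2, ← ht2]; ring
    _ ≤ ‖a • u + b • v‖ ^ 2 := by nlinarith [norm_nonneg (a • u + b • v)]


set_option maxHeartbeats 1000000 in
lemma ficken_pos (h : Hyp X) (u v : X) (hu : ‖u‖ = 1) (hv : ‖v‖ = 1)
    {r : ℝ} (hr : 0 < r) : ‖u + r • v‖ = ‖r • u + v‖ := by
  by_cases hvu : v = u
  · rw [hvu, add_comm]
  by_cases hvnu : v = -u
  · rw [hvnu]
    have e1 : u + r • (-u) = (1 - r) • u := by module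
    have e2 : r • u + -u = (r - 1) • u := by module
    rw [e1, e2, norm_smul, norm_smul, hu, Real.norm_eq_abs, Real.norm_eq_abs, abs_sub_comm]
  -- nondegenerate case
  have hu0 : u ≠ 0 := fun h0 => by simp [h0] at hu
  have hv0 : v ≠ 0 := fun h0 => by simp [h0] at hv
  have hp : 0 < ‖u + v‖ := by
    rw [norm_pos_iff]
    intro h0
    exact hvnu (eq_neg_of_add_eq_zero_right h0)
  set p := ‖u + v‖ with hpdef
  have hA : 0 < ‖u + r • v‖ := by
    rw [norm_pos_iff]
    intro h0
    have hv' : v = (-r⁻¹) • u := by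
      have h1 : r • v = -u := eq_neg_of_add_eq_zero_right h0
      have : r⁻¹ • (r • v) = r⁻¹ • (-u) := by rw [h1]
      rw [smul_smul, inv_mul_cancel₀ hr.ne', one_smul, smul_neg] at this
      rw [this]; module
    have hnv : ‖v‖ = r⁻¹ := by
      rw [hv', norm_smul, hu, Real.norm_eq_abs, abs_neg, abs_of_pos (inv_pos.2 hr), mul_one]
    have hr1 : r = 1 := by
      rw [hv] at hnv
      field_simp at hnv
      linarith
    exact hvnu (by rw [hv', hr1]; module)
  have hB : 0 < ‖r • u + v‖ := by
    rw [norm_pos_iff]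
    intro h0
    have hv' : v = (-r) • u := by
      have h1 : v = -(r • u) := eq_neg_of_add_eq_zero_right h0
      rw [h1]; module
    have hnv : ‖v‖ = r := by
      rw [hv', norm_smul, hu, Real.norm_eq_abs, abs_neg, abs_of_pos hr, mul_one]
    have hr1 : r = 1 := by rw [hv] at hnv; linarith
    exact hvnu (by rw [hv', hr1]; module)
  set A := ‖u + r • v‖ with hAdef
  set B := ‖r • u + v‖ with hBdef
  set Y1 := A⁻¹ • (u + r • v) with hY1
  set Y2 := B⁻¹ • (r • u + v) with hY2
  have hY1n : ‖Y1‖ = 1 := by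
    rw [hY1, norm_smul, Real.norm_eq_abs, abs_of_pos (inv_pos.2 hA), ← hAdef,
      inv_mul_cancel₀ hA.ne']
  have hY2n : ‖Y2‖ = 1 := by
    rw [hY2, norm_smul, Real.norm_eq_abs, abs_of_pos (inv_pos.2 hB), ← hBdef,
      inv_mul_cancel₀ hB.ne']
  have h1 : A * B * ‖Y1 + Y2‖ ^ 2 ≤ ‖A • Y1 + B • Y2‖ ^ 2 := lorch' h Y1 Y2 hY1n hY2n hA hB
  have eAY : A • Y1 + B • Y2 = (1 + r) • (u + v) := by
    rw [hY1, hY2, smul_smul, smul_smul, mul_inv_cancel₀ hA.ne', mul_inv_cancel₀ hB.ne',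
      one_smul, one_smul]
    module
  have h1' : A * B * ‖Y1 + Y2‖ ^ 2 ≤ (1 + r)^2 * p^2 := by
    calc A * B * ‖Y1 + Y2‖ ^ 2 ≤ ‖A • Y1 + B • Y2‖ ^ 2 := h1
      _ = (1 + r)^2 * p^2 := by
          rw [eAY, norm_smul, Real.norm_eq_abs, abs_of_pos (by linarith : (0:ℝ) < 1 + r),
            mul_pow]
  have eY : Y1 + Y2 = (A⁻¹ + r * B⁻¹) • u + (r * A⁻¹ + B⁻¹) • v := by
    rw [hY1, hY2]
    module
  have h2 : (A⁻¹ + r * B⁻¹) * (r * A⁻¹ + B⁻¹) * p ^ 2 ≤ ‖Y1 + Y2‖ ^ 2 := by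
    rw [eY]
    exact lorch' h u v hu hv (by positivity) (by positivity)
  have key : A * B * ((A⁻¹ + r * B⁻¹) * (r * A⁻¹ + B⁻¹)) ≤ (1 + r)^2 := by
    have hp2 : 0 < p^2 := by positivity
    have c1 : A * B * ((A⁻¹ + r * B⁻¹) * (r * A⁻¹ + B⁻¹)) * p^2 ≤ (1+r)^2 * p^2 := by
      calc A * B * ((A⁻¹ + r * B⁻¹) * (r * A⁻¹ + B⁻¹)) * p^2
          = A * B * ((A⁻¹ + r * B⁻¹) * (r * A⁻¹ + B⁻¹) * p^2) := by ring
        _ ≤ A * B * ‖Y1 + Y2‖ ^ 2 := mul_le_mul_of_nonneg_left h2 (by positivity)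
        _ ≤ (1+r)^2 * p^2 := h1'
    exact le_of_mul_le_mul_right c1 hp2
  have key2 : (B + r * A) * (r * B + A) ≤ (1 + r)^2 * (A * B) := by
    have expand : A * B * ((A⁻¹ + r * B⁻¹) * (r * A⁻¹ + B⁻¹)) * (A * B)
        = (B + r * A) * (r * B + A) := by
      field_simp
    rw [← expand]
    exact mul_le_mul_of_nonneg_right key (mul_pos hA hB).le
  have hsq : (A - B)^2 = 0 := by nlinarith [sq_nonneg (A - B), hr, key2]
  have := pow_eq_zero_iff (n := 2) (by norm_num) |>.1 hsq
  linarith [sub_eq_zero.1 this]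

lemma ficken (h : Hyp X) (u v : X) (hu : ‖u‖ = 1) (hv : ‖v‖ = 1)
    (s t : ℝ) : ‖s • u + t • v‖ = ‖t • u + s • v‖ := by
  rcases eq_or_ne s 0 with hs | hs
  · subst hs
    simp [norm_smul, hu, hv]
  · have core : ∀ (w : X), ‖w‖ = 1 → ∀ r : ℝ, ‖u + r • w‖ = ‖r • u + w‖ := by
      intro w hw r
      rcases lt_trichotomy r 0 with hr | hr | hr
      · have h1 : u + r • w = u + (-r) • (-w) := by module
        have h2 : ((-r) • u + (-w)) = -(r • u + w) := by module
        rw [h1, ficken_pos h u (-w) hu (by simpa using hw) (by linarith : (0:ℝ) < -r), h2,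
          norm_neg]
      · subst hr; simp [hu, hw]
      · exact ficken_pos h u w hu hw hr
    have e1 : ‖s • u + t • v‖ = |s| * ‖u + (t/s) • v‖ := by
      rw [show s • u + t • v = s • (u + (t/s) • v) by
        rw [smul_add, smul_smul]; field_simp, norm_smul, Real.norm_eq_abs]
    have e2 : ‖t • u + s • v‖ = |s| * ‖(t/s) • u + v‖ := by
      rw [show t • u + s • v = s • ((t/s) • u + v) by
        rw [smul_add, smul_smul]; field_simp, norm_smul, Real.norm_eq_abs]
    rw [e1, e2, core v hv (t/s)]


/-- coordinates-to-space linear map -/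
def Lm (x y : X) : (Fin 2 → ℝ) →ₗ[ℝ] X where
  toFun z := z 0 • x + z 1 • y
  map_add' z w := by simp [add_smul]; abel
  map_smul' c z := by simp [smul_smul, smul_add]

def Nf (x y : X) (z : Fin 2 → ℝ) : ℝ := ‖Lm x y z‖

def Dset (x y : X) : Set (Fin 2 → ℝ) := {z | Nf x y z ≤ 1}

variable (x y : X)

lemma Nf_cont : Continuous (Nf x y) :=
  ((Lm x y).continuous_of_finiteDimensional).norm

lemma Nf_zero : Nf x y 0 = 0 := by simp [Nf]

lemma Nf_smul (c : ℝ) (z : Fin 2 → ℝ) : Nf x y (c • z) = |c| * Nf x y z := by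
  simp only [Nf, _root_.map_smul, norm_smul, Real.norm_eq_abs]

lemma Dset_closed : IsClosed (Dset x y) :=
  IsClosed.preimage (Nf_cont x y) isClosed_Iic

lemma Dset_meas : MeasurableSet (Dset x y) := (Dset_closed x y).measurableSet

lemma Lm_ker (hx : x ≠ 0) (hind : ∀ c : ℝ, y ≠ c • x) : LinearMap.ker (Lm x y) = ⊥ := by
  rw [LinearMap.ker_eq_bot']
  intro z hz
  simp only [Lm, LinearMap.coe_mk, AddHom.coe_mk] at hz
  rcases eq_or_ne (z 1) 0 with h1 | h1
  · rw [h1, zero_smul, add_zero, smul_eq_zero] at hz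
    rcases hz with h0 | h0
    · funext i; fin_cases i <;> simp [h0, h1]
    · exact absurd h0 hx
  · exfalso
    apply hind (-(z 0) / z 1)
    have h2 : z 1 • y = -(z 0 • x) := eq_neg_of_add_eq_zero_right hz
    have h3 : (z 1)⁻¹ • (z 1 • y) = (z 1)⁻¹ • (-(z 0 • x)) := by rw [h2]
    rw [smul_smul, inv_mul_cancel₀ h1, one_smul, smul_neg, smul_smul] at h3
    rw [h3, show -(z 0) / z 1 = -((z 1)⁻¹ * z 0) by field_simp]
    module

lemma Lm_inj (hx : x ≠ 0) (hind : ∀ c : ℝ, y ≠ c • x) {z : Fin 2 → ℝ}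
    (h0 : Lm x y z = 0) : z = 0 := by
  have := LinearMap.ker_eq_bot.1 (Lm_ker x y hx hind)
  exact this (by rw [h0, map_zero])

lemma Nf_pos (hx : x ≠ 0) (hind : ∀ c : ℝ, y ≠ c • x) {z : Fin 2 → ℝ} (hz : z ≠ 0) :
    0 < Nf x y z := by
  rw [Nf, norm_pos_iff]
  exact fun h0 => hz (Lm_inj x y hx hind h0)

lemma Dset_compact (hx : x ≠ 0) (hind : ∀ c : ℝ, y ≠ c • x) : IsCompact (Dset x y) := by
  obtain ⟨K, hK, ha⟩ := (Lm x y).exists_antilipschitzWith (Lm_ker x y hx hind)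
  have hsub : Dset x y ⊆ Metric.closedBall 0 K := by
    intro z hz
    rw [mem_closedBall_zero_iff]
    calc ‖z‖ ≤ K * ‖Lm x y z - Lm x y 0‖ := by
          simpa [dist_eq_norm] using ha.le_mul_dist z 0
      _ = K * Nf x y z := by rw [map_zero, sub_zero]; rfl
      _ ≤ K * 1 := by
          exact mul_le_mul_of_nonneg_left hz (by positivity)
      _ = K := mul_one _
  exact Metric.isCompact_of_isClosed_isBounded (Dset_closed x y)
    ((Metric.isBounded_closedBall).subset hsub)

lemma Dset_ball : ∃ ε : ℝ, 0 < ε ∧ Metric.ball 0 ε ⊆ Dset x y := by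
  have h := (Nf_cont x y).continuousAt (x := 0)
  rw [ContinuousAt, Nf_zero] at h
  have h2 := h (Iio_mem_nhds (by norm_num : (0:ℝ) < 1))
  rw [Filter.mem_map, Metric.mem_nhds_iff] at h2
  obtain ⟨ε, hε, hsub⟩ := h2
  exact ⟨ε, hε, fun z hz => show Nf x y z ≤ 1 from le_of_lt (hsub hz)⟩


def Qf (x y : X) (w : Fin 2 → ℝ) : ℝ :=
  ∫ z in Dset x y, (w 0 * z 1 - w 1 * z 0)^2

lemma integrQ (hx : x ≠ 0) (hind : ∀ c : ℝ, y ≠ c • x) (α β : ℝ) :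
    IntegrableOn (fun z : Fin 2 → ℝ => (α * z 1 - β * z 0)^2) (Dset x y) := by
  exact (Continuous.continuousOn (by fun_prop)).integrableOn_compact
    (Dset_compact x y hx hind)

lemma vec_decomp (z : Fin 2 → ℝ) :
    z = z 0 • (Pi.single 0 1 : Fin 2 → ℝ) + z 1 • (Pi.single 1 1 : Fin 2 → ℝ) := by
  funext i
  fin_cases i <;> simp [Pi.single_apply]

lemma ecore (T : (Fin 2 → ℝ) →ₗ[ℝ] (Fin 2 → ℝ)) (hdet : T.det = 1 ∨ T.det = -1)
    (hiso : ∀ z, Nf x y (T z) = Nf x y z) (f : (Fin 2 → ℝ) → ℝ) (hf : Continuous f) :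
    ∫ z in Dset x y, f (T z) = ∫ z in Dset x y, f z := by
  have hdet0 : T.det ≠ 0 := by rcases hdet with h | h <;> rw [h] <;> norm_num
  have hmap : Measure.map T (volume : Measure (Fin 2 → ℝ)) = volume := by
    rw [Measure.map_linearMap_addHaar_eq_smul_addHaar volume hdet0]
    rcases hdet with h | h <;> rw [h] <;> norm_num
  set D := Dset x y with hD
  have hDm : MeasurableSet D := Dset_meas x y
  have hmemb : ∀ z, (T z ∈ D ↔ z ∈ D) := by
    intro z
    constructor <;> intro hz
    · exact show Nf x y z ≤ 1 from (hiso z) ▸ hz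
    · exact show Nf x y (T z) ≤ 1 from (hiso z).symm ▸ hz
  have hTm : AEMeasurable T (volume : Measure (Fin 2 → ℝ)) :=
    (T.continuous_of_finiteDimensional).aemeasurable
  have hgm : AEStronglyMeasurable (D.indicator f)
      (Measure.map T (volume : Measure (Fin 2 → ℝ))) := by
    rw [hmap]
    exact ((hf.stronglyMeasurable).indicator hDm).aestronglyMeasurable
  calc ∫ z in D, f (T z) = ∫ z, D.indicator (fun w => f (T w)) z := by
        rw [integral_indicator hDm]
    _ = ∫ z, D.indicator f (T z) := by
        congr 1
        funext z
        by_cases hz : z ∈ D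
        · rw [Set.indicator_of_mem hz, Set.indicator_of_mem ((hmemb z).2 hz)]
        · rw [Set.indicator_of_notMem hz,
            Set.indicator_of_notMem (fun hc => hz ((hmemb z).1 hc))]
    _ = ∫ w, D.indicator f w ∂(Measure.map T volume) := (integral_map hTm hgm).symm
    _ = ∫ w, D.indicator f w := by rw [hmap]
    _ = ∫ z in D, f z := integral_indicator hDm

lemma Qf_inv (T : (Fin 2 → ℝ) →ₗ[ℝ] (Fin 2 → ℝ)) (hdet : T.det = 1 ∨ T.det = -1)
    (hiso : ∀ z, Nf x y (T z) = Nf x y z) (w : Fin 2 → ℝ) :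
    Qf x y (T w) = Qf x y w := by
  set t00 := T (Pi.single 0 1) 0
  set t01 := T (Pi.single 1 1) 0
  set t10 := T (Pi.single 0 1) 1
  set t11 := T (Pi.single 1 1) 1
  have hT : ∀ z : Fin 2 → ℝ, (T z 0 = t00 * z 0 + t01 * z 1)
      ∧ (T z 1 = t10 * z 0 + t11 * z 1) := by
    intro z
    have hz := vec_decomp z
    constructor
    · conv_lhs => rw [hz]
      simp [mul_comm]; rfl
    · conv_lhs => rw [hz]
      simp [mul_comm]; rfl
  have hdet2 : T.det = t00 * t11 - t01 * t10 := by
    rw [← LinearMap.det_toMatrix' T, Matrix.det_fin_two]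
    have e : ∀ i j, LinearMap.toMatrix' T i j = T (Pi.single j 1) i := by
      intro i j
      rw [LinearMap.toMatrix'_apply]
    rw [e 0 0, e 0 1, e 1 0, e 1 1]
  have cross : ∀ v z : Fin 2 → ℝ,
      (T v) 0 * (T z) 1 - (T v) 1 * (T z) 0 = T.det * (v 0 * z 1 - v 1 * z 0) := by
    intro v z
    rw [(hT v).1, (hT v).2, (hT z).1, (hT z).2, hdet2]
    ring
  have step : ∫ z in Dset x y, ((T w) 0 * z 1 - (T w) 1 * z 0)^2
      = ∫ z in Dset x y, ((T w) 0 * (T z) 1 - (T w) 1 * (T z) 0)^2 :=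
    (ecore x y T hdet hiso (fun z => ((T w) 0 * z 1 - (T w) 1 * z 0)^2) (by fun_prop)).symm
  have step2 : (fun z => ((T w) 0 * (T z) 1 - (T w) 1 * (T z) 0)^2)
      = fun z : Fin 2 → ℝ => (w 0 * z 1 - w 1 * z 0)^2 := by
    funext z
    rw [cross w z]
    rcases hdet with h | h <;> rw [h] <;> ring
  rw [Qf, step, step2, Qf]

lemma Qf_smul (c : ℝ) (w : Fin 2 → ℝ) : Qf x y (c • w) = c^2 * Qf x y w := by
  have e : (fun z : Fin 2 → ℝ => ((c • w) 0 * z 1 - (c • w) 1 * z 0)^2)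
      = fun z : Fin 2 → ℝ => c^2 * ((w 0 * z 1 - w 1 * z 0)^2) := by
    funext z
    simp only [Pi.smul_apply, smul_eq_mul]
    ring
  rw [Qf, e, integral_const_mul, Qf]

lemma Qf_par (hx : x ≠ 0) (hind : ∀ c : ℝ, y ≠ c • x) (w₁ w₂ : Fin 2 → ℝ) :
    Qf x y (w₁ + w₂) + Qf x y (w₁ - w₂) = 2 * Qf x y w₁ + 2 * Qf x y w₂ := by
  have I : ∀ v : Fin 2 → ℝ,
      IntegrableOn (fun z : Fin 2 → ℝ => (v 0 * z 1 - v 1 * z 0)^2) (Dset x y) :=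
    fun v => integrQ x y hx hind (v 0) (v 1)
  have e1 : Qf x y (w₁ + w₂) + Qf x y (w₁ - w₂)
      = ∫ z in Dset x y, (((w₁ + w₂) 0 * z 1 - (w₁ + w₂) 1 * z 0)^2
          + ((w₁ - w₂) 0 * z 1 - (w₁ - w₂) 1 * z 0)^2) :=
    (integral_add (I (w₁ + w₂)) (I (w₁ - w₂))).symm
  have e2 : (fun z : Fin 2 → ℝ => (((w₁ + w₂) 0 * z 1 - (w₁ + w₂) 1 * z 0)^2
          + ((w₁ - w₂) 0 * z 1 - (w₁ - w₂) 1 * z 0)^2))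
      = fun z : Fin 2 → ℝ => 2 * ((w₁ 0 * z 1 - w₁ 1 * z 0)^2)
          + 2 * ((w₂ 0 * z 1 - w₂ 1 * z 0)^2) := by
    funext z
    simp only [Pi.add_apply, Pi.sub_apply]
    ring
  rw [e1, e2, integral_add ((I w₁).const_mul 2) ((I w₂).const_mul 2),
    integral_const_mul, integral_const_mul, Qf, Qf]

lemma Qf_pos (hx : x ≠ 0) (hind : ∀ c : ℝ, y ≠ c • x) {w : Fin 2 → ℝ} (hw : w ≠ 0) :
    0 < Qf x y w := by
  obtain ⟨ε, hε, hball⟩ := Dset_ball x y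
  set g : (Fin 2 → ℝ) → ℝ := fun z => w 0 * z 1 - w 1 * z 0 with hg
  have hne : w 0 ≠ 0 ∨ w 1 ≠ 0 := by
    by_contra hc
    push_neg at hc
    exact hw (by funext i; fin_cases i <;> simp [hc.1, hc.2])
  set m : ℝ := max |w 0| |w 1| with hm
  have hm0 : 0 < m := by
    rcases hne with h0 | h0
    · exact lt_max_of_lt_left (abs_pos.2 h0)
    · exact lt_max_of_lt_right (abs_pos.2 h0)
  have hw2 : 0 < w 0^2 + w 1^2 := by
    rcases hne with h0 | h0
    · have := sq_nonneg (w 1); nlinarith [sq_pos_of_ne_zero h0]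
    · have := sq_nonneg (w 0); nlinarith [sq_pos_of_ne_zero h0]
  set γ : ℝ := (ε/(2*m)) * (w 0^2 + w 1^2) with hγdef
  have hγ0 : 0 < γ := mul_pos (div_pos hε (by linarith)) hw2
  set zs : Fin 2 → ℝ := (ε/(2*m)) • ![-(w 1), w 0] with hzs
  have hzs0 : zs 0 = (ε/(2*m)) * (-(w 1)) := by simp [hzs]
  have hzs1 : zs 1 = (ε/(2*m)) * (w 0) := by simp [hzs]
  have hgzs : g zs = γ := by
    rw [hg]
    simp only [hzs0, hzs1, hγdef]
    ring
  set δ : ℝ := min (ε/4) (γ/(4*m)) with hδdef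
  have hδ0 : 0 < δ := lt_min (by linarith) (div_pos hγ0 (by linarith))
  have hvecn : ‖![-(w 1), w 0]‖ ≤ m := by
    rw [pi_norm_le_iff_of_nonneg hm0.le]
    intro i
    fin_cases i
    · show ‖-(w 1)‖ ≤ m
      rw [Real.norm_eq_abs, abs_neg, hm]
      exact le_max_right _ _
    · show ‖w 0‖ ≤ m
      rw [Real.norm_eq_abs, hm]
      exact le_max_left _ _
  have hzsnorm : ‖zs‖ ≤ ε/2 := by
    rw [hzs, norm_smul, Real.norm_eq_abs, abs_of_pos (div_pos hε (by linarith))]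
    calc ε/(2*m) * ‖![-(w 1), w 0]‖ ≤ ε/(2*m) * m :=
          mul_le_mul_of_nonneg_left hvecn (le_of_lt (div_pos hε (by linarith)))
      _ = ε/2 := by field_simp
  have hB'D : Metric.ball zs δ ⊆ Dset x y := by
    intro z hz
    apply hball
    rw [Metric.mem_ball, dist_zero_right]
    have h1 : ‖z - zs‖ < δ := by rwa [Metric.mem_ball, dist_eq_norm] at hz
    calc ‖z‖ ≤ ‖z - zs‖ + ‖zs‖ := by
          simpa using norm_add_le (z - zs) zs
      _ < δ + ε/2 := by linarith
      _ ≤ ε/4 + ε/2 := by linarith [min_le_left (ε/4) (γ/(4*m))]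
      _ < ε := by linarith
  have hlow : ∀ z ∈ Metric.ball zs δ, γ/2 ≤ g z := by
    intro z hz
    clear_value g m γ zs δ
    have h1 : ‖z - zs‖ < δ := by rwa [Metric.mem_ball, dist_eq_norm] at hz
    have hc0 : |z 0 - zs 0| ≤ ‖z - zs‖ := by
      simpa [Real.norm_eq_abs] using norm_le_pi_norm (z - zs) 0
    have hc1 : |z 1 - zs 1| ≤ ‖z - zs‖ := by
      simpa [Real.norm_eq_abs] using norm_le_pi_norm (z - zs) 1
    have hdiff : |g z - g zs| ≤ 2*m*‖z - zs‖ := by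
      have e : g z - g zs = w 0 * (z 1 - zs 1) - w 1 * (z 0 - zs 0) := by rw [hg]; ring
      calc |g z - g zs| ≤ |w 0 * (z 1 - zs 1)| + |w 1 * (z 0 - zs 0)| := by
            rw [e]; exact abs_sub _ _
        _ = |w 0| * |z 1 - zs 1| + |w 1| * |z 0 - zs 0| := by rw [abs_mul, abs_mul]
        _ ≤ m * ‖z - zs‖ + m * ‖z - zs‖ := by
            gcongr
            · rw [hm]; exact le_max_left _ _
            · rw [hm]; exact le_max_right _ _
        _ = 2*m*‖z - zs‖ := by ring
    have hδm : 2*m*‖z - zs‖ ≤ γ/2 := by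
      have h2 : ‖z - zs‖ ≤ γ/(4*m) := le_trans h1.le (by rw [hδdef]; exact min_le_right _ _)
      calc 2*m*‖z - zs‖ ≤ 2*m*(γ/(4*m)) := by
            exact mul_le_mul_of_nonneg_left h2 (by linarith)
        _ = γ/2 := by field_simp; ring
    have h3 := abs_le.1 hdiff
    linarith [h3.1, hgzs, hδm]
  have hIball : IntegrableOn (fun z : Fin 2 → ℝ => (g z)^2) (Metric.ball zs δ) :=
    (integrQ x y hx hind (w 0) (w 1)).mono_set hB'D
  have hvol0 : 0 < (volume (Metric.ball zs δ)).toReal := by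
    refine ENNReal.toReal_pos (ne_of_gt (Metric.measure_ball_pos volume zs hδ0)) ?_
    exact ne_of_lt measure_ball_lt_top
  have step1 : (volume (Metric.ball zs δ)).toReal * ((γ/2)^2)
      ≤ ∫ z in Metric.ball zs δ, (g z)^2 := by
    have := setIntegral_mono_on (f := fun _ => (γ/2)^2) (g := fun z => (g z)^2)
      (integrableOn_const measure_ball_lt_top.ne) hIball
      measurableSet_ball (fun z hz => by nlinarith [hlow z hz, hγ0])
    simpa [setIntegral_const, smul_eq_mul, measureReal_def] using this
  have step2 : ∫ z in Metric.ball zs δ, (g z)^2 ≤ ∫ z in Dset x y, (g z)^2 := by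
    apply setIntegral_mono_set (integrQ x y hx hind (w 0) (w 1))
    · exact Filter.Eventually.of_forall (fun z => sq_nonneg _)
    · exact HasSubset.Subset.eventuallyLE hB'D
  have : 0 < ∫ z in Dset x y, (g z)^2 := by
    have hγ2 : 0 < (volume (Metric.ball zs δ)).toReal * ((γ/2)^2) := by positivity
    linarith
  exact this


/-- the swap isometry -/
lemma swap_exists (h : Hyp X) {u v : Fin 2 → ℝ}
    (hli : LinearIndependent ℝ ![u, v]) (hu : Nf x y u = 1) (hv : Nf x y v = 1) :
    ∃ T : (Fin 2 → ℝ) →ₗ[ℝ] (Fin 2 → ℝ),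
      (T.det = 1 ∨ T.det = -1) ∧ (∀ z, Nf x y (T z) = Nf x y z) ∧ T u = v := by
  have hcard : Fintype.card (Fin 2) = Module.finrank ℝ (Fin 2 → ℝ) := by
    simp [Module.finrank_fin_fun]
  set b := basisOfLinearIndependentOfCardEqFinrank hli hcard with hb
  have hb0 : b 0 = u := by rw [hb, coe_basisOfLinearIndependentOfCardEqFinrank]; rfl
  have hb1 : b 1 = v := by rw [hb, coe_basisOfLinearIndependentOfCardEqFinrank]; rfl
  set T : (Fin 2 → ℝ) →ₗ[ℝ] (Fin 2 → ℝ) := b.constr ℝ ![v, u] with hT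
  have hTu : T u = v := by rw [hT, ← hb0, b.constr_basis]; rfl
  have hTv : T v = u := by rw [hT, ← hb1, b.constr_basis]; rfl
  refine ⟨T, Or.inr ?_, ?_, hTu⟩
  · -- determinant
    rw [← LinearMap.det_toMatrix b, show LinearMap.toMatrix b b T = !![0, 1; 1, 0] from ?_,
      Matrix.det_fin_two_of]
    · norm_num
    · ext i j
      rw [LinearMap.toMatrix_apply]
      fin_cases i <;> fin_cases j <;>
        simp only [Fin.zero_eta, Fin.mk_one, hb0, hb1, hTu, hTv] <;>
        first
        | (rw [← hb1, Module.Basis.repr_self]; simp [Finsupp.single_apply])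
        | (rw [← hb0, Module.Basis.repr_self]; simp [Finsupp.single_apply])
  · -- isometry
    intro z
    have hz : z = b.repr z 0 • u + b.repr z 1 • v := by
      conv_lhs => rw [← b.sum_repr z]
      rw [Fin.sum_univ_two, hb0, hb1]
    have hTz : T z = b.repr z 0 • v + b.repr z 1 • u := by
      conv_lhs => rw [hz]
      rw [map_add, _root_.map_smul, _root_.map_smul, hTu, hTv]
    have hLu : ‖Lm x y u‖ = 1 := hu
    have hLv : ‖Lm x y v‖ = 1 := hv
    rw [Nf, Nf, hTz]
    conv_rhs => rw [hz]
    rw [map_add, _root_.map_smul, _root_.map_smul, map_add, _root_.map_smul, _root_.map_smul]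
    rw [show (b.repr z 0 • Lm x y v + b.repr z 1 • Lm x y u)
        = b.repr z 1 • Lm x y u + b.repr z 0 • Lm x y v from add_comm _ _]
    exact ficken h (Lm x y u) (Lm x y v) hLu hLv (b.repr z 1) (b.repr z 0)


lemma key (h : Hyp X) (x y : X) (hx : x ≠ 0) (hind : ∀ c : ℝ, y ≠ c • x) :
    ‖x + y‖^2 + ‖x - y‖^2 = 2*‖x‖^2 + 2*‖y‖^2 := by
  have huv : ∀ u v : Fin 2 → ℝ, Nf x y u = 1 → Nf x y v = 1 → Qf x y u = Qf x y v := by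
    intro u v hu hv
    by_cases hli : LinearIndependent ℝ ![u, v]
    · obtain ⟨T, hdet, hiso, hTu⟩ := swap_exists x y h hli hu hv
      rw [← hTu, Qf_inv x y T hdet hiso u]
    · have hu0 : u ≠ 0 := by
        intro h0
        rw [h0] at hu
        simp [Nf] at hu
      have hv0 : v ≠ 0 := by
        intro h0
        rw [h0] at hv
        simp [Nf] at hv
      rw [linearIndependent_fin2] at hli
      push_neg at hli
      simp only [Matrix.cons_val_one, Matrix.head_cons, Matrix.cons_val_zero] at hli
      obtain ⟨a, ha⟩ := hli hv0
      have ha1 : a^2 = 1 := by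
        have h1 : Nf x y u = |a| * Nf x y v := by rw [← ha, Nf_smul]
        rw [hu, hv, mul_one] at h1
        rw [← sq_abs, ← h1]
        norm_num
      rw [← ha, Qf_smul, ha1, one_mul]
  set e10 : Fin 2 → ℝ := ![1, 0] with he10
  set e01 : Fin 2 → ℝ := ![0, 1] with he01
  set e11 : Fin 2 → ℝ := ![1, 1] with he11
  set e1m : Fin 2 → ℝ := ![1, -1] with he1m
  have hN10 : Nf x y e10 = ‖x‖ := by simp [Nf, Lm, he10]
  have hN01 : Nf x y e01 = ‖y‖ := by simp [Nf, Lm, he01]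
  have hN11 : Nf x y e11 = ‖x + y‖ := by simp [Nf, Lm, he11]
  have hN1m : Nf x y e1m = ‖x - y‖ := by simp [Nf, Lm, he1m, sub_eq_add_neg]
  have hxn : 0 < ‖x‖ := norm_pos_iff.2 hx
  set k : ℝ := Qf x y ((‖x‖)⁻¹ • e10) with hk
  have hkunit : Nf x y ((‖x‖)⁻¹ • e10) = 1 := by
    rw [Nf_smul, hN10, abs_of_pos (inv_pos.2 hxn), inv_mul_cancel₀ hxn.ne']
  have hk0 : 0 < k := by
    apply Qf_pos x y hx hind
    intro h0
    rw [h0, Nf_zero] at hkunit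
    norm_num at hkunit
  have hval : ∀ z : Fin 2 → ℝ, z ≠ 0 → Qf x y z = (Nf x y z)^2 * k := by
    intro z hz
    have hNz : 0 < Nf x y z := Nf_pos x y hx hind hz
    have hzhat : Nf x y ((Nf x y z)⁻¹ • z) = 1 := by
      rw [Nf_smul, abs_of_pos (inv_pos.2 hNz), inv_mul_cancel₀ hNz.ne']
    have hzdec : z = (Nf x y z) • ((Nf x y z)⁻¹ • z) := by
      rw [smul_smul, mul_inv_cancel₀ hNz.ne', one_smul]
    calc Qf x y z = Qf x y ((Nf x y z) • ((Nf x y z)⁻¹ • z)) := by rw [← hzdec]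
      _ = (Nf x y z)^2 * Qf x y ((Nf x y z)⁻¹ • z) := Qf_smul x y _ _
      _ = (Nf x y z)^2 * k := by rw [huv _ _ hzhat hkunit]
  have hne11 : e11 ≠ 0 := by
    intro h0
    have := congrFun h0 0
    simp [he11] at this
  have hne1m : e1m ≠ 0 := by
    intro h0
    have := congrFun h0 0
    simp [he1m] at this
  have hne10 : e10 ≠ 0 := by
    intro h0
    have := congrFun h0 0
    simp [he10] at this
  have hne01 : e01 ≠ 0 := by
    intro h0
    have := congrFun h0 1
    simp [he01] at this
  have hsum : e10 + e01 = e11 := by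
    funext i
    fin_cases i <;> simp [he10, he01, he11]
  have hdiff : e10 - e01 = e1m := by
    funext i
    fin_cases i <;> simp [he10, he01, he1m]
  have hpar := Qf_par x y hx hind e10 e01
  rw [hsum, hdiff, hval e11 hne11, hval e1m hne1m, hval e10 hne10, hval e01 hne01,
    hN11, hN1m, hN10, hN01] at hpar
  have : (‖x + y‖^2 + ‖x - y‖^2) * k = (2*‖x‖^2 + 2*‖y‖^2) * k := by ring_nf; ring_nf at hpar; linarith
  exact mul_right_cancel₀ hk0.ne' this

end
end Stmt13Aux

theorem stmt_13 {X : Type*} [NormedAddCommGroup X] [NormedSpace ℝ X] :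
    (∀ x y : X, ‖x + y‖ ^ 2 + ‖x - y‖ ^ 2 = 2 * ‖x‖ ^ 2 + 2 * ‖y‖ ^ 2) ↔
    (∀ x y : X, x ≠ 0 → y ≠ 0 →
      ‖(1 / ‖x‖) • x - (1 / ‖y‖) • y‖ ≤ ‖(1 / ‖y‖) • x - (1 / ‖x‖) • y‖) := by
  constructor
  · intro h x y hx hy
    letI : InnerProductSpace ℝ X := InnerProductSpace.ofNorm ℝ
      (fun x y => by have := h x y; nlinarith [this])
    set a := ‖x‖ with ha
    set b := ‖y‖ with hb
    have ha0 : 0 < a := norm_pos_iff.2 hx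
    have hb0 : 0 < b := norm_pos_iff.2 hy
    have e1 : ‖(1 / a) • x - (1 / b) • y‖ ^ 2
        = (1/a)^2 * a^2 - 2 * ((1/a)*(1/b)) * (inner ℝ x y : ℝ) + (1/b)^2 * b^2 := by
      rw [@norm_sub_sq_real]
      simp [norm_smul, real_inner_smul_left, real_inner_smul_right, abs_of_pos, ha0, hb0]
      ring
    have e2 : ‖(1 / b) • x - (1 / a) • y‖ ^ 2
        = (1/b)^2 * a^2 - 2 * ((1/a)*(1/b)) * (inner ℝ x y : ℝ) + (1/a)^2 * b^2 := by
      rw [@norm_sub_sq_real]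
      simp [norm_smul, real_inner_smul_left, real_inner_smul_right, abs_of_pos, ha0, hb0]
      ring
    have key : ‖(1 / a) • x - (1 / b) • y‖ ^ 2 ≤ ‖(1 / b) • x - (1 / a) • y‖ ^ 2 := by
      rw [e1, e2]
      have h4 : 0 ≤ (a/b - b/a)^2 := sq_nonneg _
      have : (1/b)^2 * a^2 + (1/a)^2 * b^2 - ((1/a)^2*a^2 + (1/b)^2*b^2) = (a/b - b/a)^2 := by
        field_simp; ring
      nlinarith
    nlinarith [norm_nonneg ((1 / a) • x - (1 / b) • y), norm_nonneg ((1 / b) • x - (1 / a) • y)]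
  · intro h x y
    by_cases hx : x = 0
    · subst hx
      simp only [zero_add, zero_sub, norm_neg, norm_zero]
      ring
    by_cases hdep : ∃ c : ℝ, y = c • x
    · obtain ⟨c, hc⟩ := hdep
      subst hc
      have e1 : x + c • x = (1 + c) • x := by module
      have e2 : x - c • x = (1 - c) • x := by module
      rw [e1, e2, norm_smul, norm_smul, norm_smul, Real.norm_eq_abs, Real.norm_eq_abs,
        Real.norm_eq_abs, mul_pow, mul_pow, mul_pow, sq_abs, sq_abs, sq_abs]
      ring
    · push_neg at hdep
      exact Stmt13Aux.key h x y hx hdep
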